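/- If the orbit of x₀ ∈ ℕ under S is bounded, then the orbit reaches 0: there exists N ∈ ℕ with S^[N](x₀) = 0. Equivalently, every orbit of S either reaches 0 or is unbounded. -/

import Mathlib

/-- The symmetric rule: `S n = n / 2` if `n` is even,
`S n = (n ^ 2 - 1) / 4` if `n` is odd. -/
def S (n : ℕ) : ℕ := if Even n then n / 2 else (n ^ 2 - 1) / 4

lemma S_even {n : ℕ} (h : Even n) : S n = n / 2 := by
  rw [S, if_pos h]

lemma S_odd (k : ℕ) : S (2 * k + 1) = k * (k + 1) := by
  have hodd : ¬ Even (2 * k + 1) := by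
    rw [Nat.even_iff]; omega
  have h2 : (2 * k + 1) ^ 2 - 1 = 4 * (k * (k + 1)) := by
    have : (2 * k + 1) ^ 2 = 4 * (k * (k + 1)) + 1 := by ring
    omega
  rw [S, if_neg hodd, h2, Nat.mul_div_cancel_left _ (by norm_num)]

lemma S_halve : ∀ (t x : ℕ), S^[t] (2 ^ t * x) = x := by
  intro t
  induction t with
  | zero => intro x; simp
  | succ t ih =>
    intro x
    have he : Even (2 ^ (t + 1) * x) := ⟨2 ^ t * x, by ring⟩
    have hs : S (2 ^ (t + 1) * x) = 2 ^ t * x := by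
      rw [S_even he]
      have : 2 ^ (t + 1) * x = 2 * (2 ^ t * x) := by ring
      rw [this, Nat.mul_div_cancel_left _ (by norm_num)]
    rw [Function.iterate_succ_apply, hs, ih]

theorem stmt_14 (x₀ : ℕ) (B : ℕ) (hB : ∀ n : ℕ, S^[n] x₀ ≤ B) :
    ∃ N : ℕ, S^[N] x₀ = 0 := by
  classical
  -- pigeonhole: two equal iterates
  obtain ⟨a, b, hne, hab⟩ := Finite.exists_ne_map_eq_of_infinite
    (fun n : ℕ => (⟨S^[n] x₀, Nat.lt_succ_of_le (hB n)⟩ : Fin (B + 1)))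
  have hab' : S^[a] x₀ = S^[b] x₀ := congrArg Fin.val hab
  -- wlog i < j
  obtain ⟨i, j, hij, hijeq⟩ : ∃ i j : ℕ, i < j ∧ S^[i] x₀ = S^[j] x₀ := by
    rcases hne.lt_or_gt with h | h
    · exact ⟨a, b, h, hab'⟩
    · exact ⟨b, a, h, hab'.symm⟩
  set A := S^[i] x₀ with hA
  set p := j - i with hpdef
  have hp : 0 < p := by omega
  have hper : S^[p] A = A := by
    rw [hA, ← Function.iterate_add_apply]
    have : p + i = j := by omega
    rw [this, ← hijeq]
  -- orbit predicate
  set Q : ℕ → Prop := fun n => ∃ k : ℕ, S^[k] A = n with hQ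
  have hQA : Q A := ⟨0, rfl⟩
  have hex : ∃ n, Q n := ⟨A, hQA⟩
  set m := Nat.find hex with hm
  have hmQ : Q m := Nat.find_spec hex
  have hmin : ∀ n, Q n → m ≤ n := fun n h => Nat.find_min' hex h
  -- successors stay in orbit
  have succ_mem : ∀ y, Q y → Q (S y) := by
    rintro y ⟨k, rfl⟩
    exact ⟨k + 1, Function.iterate_succ_apply' S k A⟩
  have iter_mem : ∀ (t : ℕ) (y : ℕ), Q y → Q (S^[t] y) := by
    rintro t y ⟨k, rfl⟩
    exact ⟨t + k, Function.iterate_add_apply S t k A⟩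
  -- predecessors exist
  have pred_mem : ∀ y, Q y → ∃ z, Q z ∧ S z = y := by
    rintro y ⟨k, rfl⟩
    refine ⟨S^[k + p - 1] A, ⟨k + p - 1, rfl⟩, ?_⟩
    have h1 : S (S^[k + p - 1] A) = S^[k + p] A := by
      rw [← Function.iterate_succ_apply' S (k + p - 1) A]
      congr 1
      omega
    rw [h1, Function.iterate_add_apply, hper]
  -- boundedness of orbit
  have bound : ∀ y, Q y → y ≤ B := by
    rintro y ⟨k, rfl⟩
    rw [hA, ← Function.iterate_add_apply]
    exact hB (k + i)
  -- main claim: m = 0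
  have hm0 : m = 0 := by
    by_contra h0
    -- m is odd
    have hmodd : ¬ Even m := by
      intro he
      have h2 : S m = m / 2 := S_even he
      have := hmin _ (succ_mem m hmQ)
      rw [h2] at this
      have : m % 2 = 0 := Nat.even_iff.mp he
      omega
    have hm1 : m ≠ 1 := by
      intro h1
      have : S m = 0 := by rw [h1]; simpa using S_odd 0
      have := hmin _ (succ_mem m hmQ)
      omega
    have hm3 : 3 ≤ m := by
      rcases Nat.even_or_odd m with h | h
      · exact absurd h hmodd
      · obtain ⟨c, hc⟩ := h
        omega
    -- walk back to the first odd predecessor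
    have chain : ∀ t : ℕ, (∃ r, Q r ∧ ¬ Even r ∧ ∃ jj, S r = 2 ^ jj * m)
        ∨ Q (2 ^ t * m) := by
      intro t
      induction t with
      | zero => right; simpa using hmQ
      | succ t ih =>
        rcases ih with h | h
        · left; exact h
        · obtain ⟨z, hz, hSz⟩ := pred_mem _ h
          rcases Nat.even_or_odd z with he | ho
          · right
            have hz2 : z = 2 ^ (t + 1) * m := by
              rw [S_even he] at hSz
              obtain ⟨c, hc⟩ := he
              have h2m : 2 ^ (t + 1) * m = 2 * (2 ^ t * m) := by ring
              omega
            rwa [← hz2]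
          · left
            exact ⟨z, hz, (Nat.not_even_iff_odd).mpr ho, t, hSz⟩
    obtain ⟨r, hrQ, hrodd, jj, hSr⟩ : ∃ r, Q r ∧ ¬ Even r ∧ ∃ jj, S r = 2 ^ jj * m := by
      rcases chain (B + 1) with h | h
      · exact h
      · exfalso
        have hb := bound _ h
        have h2 : B + 1 < 2 ^ (B + 1) := Nat.lt_two_pow_self (n := B + 1)
        have hm1' : 1 ≤ m := by omega
        nlinarith [Nat.one_le_two_pow (n := B + 1)]
    -- r = 2k+1
    obtain ⟨k, hk⟩ : ∃ k, r = 2 * k + 1 := by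
      rcases Nat.even_or_odd r with he | ho
      · exact absurd he hrodd
      · obtain ⟨k, hk⟩ := ho; exact ⟨k, by omega⟩
    have hrm : m ≤ r := hmin _ hrQ
    have hk1 : 1 ≤ k := by omega
    have hkey : k * (k + 1) = 2 ^ jj * m := by
      rw [hk, S_odd] at hSr; exact hSr
    -- split on parity of k
    have habs : False := by
      rcases Nat.even_or_odd k with hke | hko
      · -- k even, k + 1 odd : 2^jj ∣ k
        have hcop : Nat.Coprime (2 ^ jj) (k + 1) := by
          apply Nat.Coprime.pow_left
          rw [Nat.coprime_two_left]
          exact Even.add_one hke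
        have hdvd : 2 ^ jj ∣ k * (k + 1) := ⟨m, hkey⟩
        have hdk : 2 ^ jj ∣ k := (Nat.Coprime.dvd_of_dvd_mul_right hcop) hdvd
        obtain ⟨u, hu⟩ := hdk
        have hum : u * (k + 1) = m := by
          have h2 : 2 ^ jj * (u * (k + 1)) = 2 ^ jj * m := by
            rw [← hkey, hu]; ring
          exact Nat.eq_of_mul_eq_mul_left (Nat.pow_pos (n := jj) (by norm_num)) h2
        have hu1 : u = 1 := by
          have hle : u * (k + 1) ≤ 2 * k + 1 := by omega
          have hu0 : u ≠ 0 := by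
            rintro rfl
            simp at hum
            omega
          by_contra hune
          have h2u : 2 ≤ u := by omega
          have : 2 * (k + 1) ≤ u * (k + 1) := Nat.mul_le_mul_right _ h2u
          omega
        rw [hu1, mul_one] at hu
        rw [hu1, one_mul] at hum
        have hkval : k = 2 ^ jj := hu
        have hjj1 : 1 ≤ jj := by
          by_contra hc
          have : jj = 0 := by omega
          rw [this] at hkval
          simp at hkval
          rw [hkval] at hke
          exact (by norm_num : ¬ Even 1) hke
        -- m = 2^jj + 1 = 2 * 2^(jj-1) + 1
        set c := jj - 1 with hc
        have h2c : 2 ^ jj = 2 * 2 ^ c := by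
          rw [hc, ← pow_succ']
          congr 1
          omega
        have hmval : m = 2 * 2 ^ c + 1 := by omega
        have hSm : S m = 2 ^ c * (2 ^ c + 1) := by
          rw [hmval, S_odd]
        have hQsmall : Q (2 ^ c + 1) := by
          have h1 : Q (S m) := succ_mem m hmQ
          have h2 : Q (S^[c] (S m)) := iter_mem c _ h1
          rwa [hSm, S_halve] at h2
        have := hmin _ hQsmall
        have hcpos : 1 ≤ 2 ^ c := Nat.one_le_two_pow
        omega
      · -- k odd : 2^jj ∣ k + 1
        have hcop : Nat.Coprime (2 ^ jj) k := by
          apply Nat.Coprime.pow_left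
          rw [Nat.coprime_two_left]
          exact hko
        have hdvd : 2 ^ jj ∣ k * (k + 1) := ⟨m, hkey⟩
        have hdk : 2 ^ jj ∣ k + 1 := by
          have h' : 2 ^ jj ∣ (k + 1) * k := by rwa [mul_comm] at hdvd
          exact (Nat.Coprime.dvd_of_dvd_mul_right hcop) h'
        obtain ⟨v, hv⟩ := hdk
        have hvm : k * v = m := by
          have h2 : 2 ^ jj * (k * v) = 2 ^ jj * m := by
            rw [← hkey, hv]; ring
          exact Nat.eq_of_mul_eq_mul_left (Nat.pow_pos (n := jj) (by norm_num)) h2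
        have hvodd : ¬ Even v := by
          intro hev
          exact hmodd (hvm ▸ (hev.mul_left k))
        have hv1 : v = 1 := by
          by_contra hvne
          have hv3 : 3 ≤ v := by
            rcases Nat.even_or_odd v with he | ho
            · exact absurd he hvodd
            · obtain ⟨c, hc⟩ := ho; omega
          have hmle : k * v ≤ 2 * k + 1 := by omega
          have hk1' : k = 1 := by nlinarith
          rw [hk1'] at hv
          have : 2 ^ jj * v ≥ 3 := by
            have : 1 ≤ 2 ^ jj := Nat.one_le_two_pow
            nlinarith
          omega
        rw [hv1, mul_one] at hv
        rw [hv1, mul_one] at hvm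
        have hkval : k + 1 = 2 ^ jj := hv
        have hmk : m = k := hvm.symm
        have hjj2 : 2 ≤ jj := by
          by_contra hc
          interval_cases jj <;> omega
        set c := jj - 1 with hc
        have h2c : 2 ^ jj = 2 * 2 ^ c := by
          rw [hc, ← pow_succ']
          congr 1
          omega
        have hcge : 1 ≤ c := by omega
        have hmval : m = 2 * (2 ^ c - 1) + 1 := by
          have : 1 ≤ 2 ^ c := Nat.one_le_two_pow
          omega
        have hSm : S m = 2 ^ c * (2 ^ c - 1) := by
          rw [hmval, S_odd]
          have : 1 ≤ 2 ^ c := Nat.one_le_two_pow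
          have hh : (2 ^ c - 1) + 1 = 2 ^ c := by omega
          rw [hh]
          ring
        have hQsmall : Q (2 ^ c - 1) := by
          have h1 : Q (S m) := succ_mem m hmQ
          have h2 : Q (S^[c] (S m)) := iter_mem c _ h1
          rwa [hSm, S_halve] at h2
        have := hmin _ hQsmall
        have hcpos : 1 ≤ 2 ^ c := Nat.one_le_two_pow
        omega
    exact habs
  obtain ⟨k, hk⟩ := hmQ
  refine ⟨k + i, ?_⟩
  rw [Function.iterate_add_apply, ← hA, hk, hm0]
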